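/- If information structure S Blackwell-dominates T (i.e., S M = T for some stochastic matrix M), then for every convex function h : Δ(Θ) → ℝ and every belief μ, the expected value of h at the posterior under S is at least that under T: Σ_s α_s(μ) h(μ_S(s)) ≥ Σ_t β_t(μ) h(μ_T(t)). -/

import Mathlib

open Finset

noncomputable def post {Θ S : Type*} [Fintype Θ] (f : Θ → S → ℝ) (μ : Θ → ℝ) (s : S) :
    Θ → ℝ :=
  fun θ => μ θ * f θ s / (∑ θ', μ θ' * f θ' s)

noncomputable def Eexp {Θ S : Type*} [Fintype Θ] [Fintype S] (f : Θ → S → ℝ)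
    (V : (Θ → ℝ) → ℝ) (μ : Θ → ℝ) : ℝ :=
  ∑ s, (∑ θ, μ θ * f θ s) * V (post f μ s)

/-- one direction of Blackwell's theorem: if information structure `S`
(matrix `f`) Blackwell-dominates `T` (matrix `g`), i.e. `g = f M` for a row-stochastic
matrix `M`, then for every convex function `h` on the simplex and every belief `μ`, the
expected value of `h` at the posterior under `S` is at least that under `T`. -/
theorem blackwell_garbling_expected_convex {Θ S T : Type*}
    [Fintype Θ] [Fintype S] [Fintype T]
    (f : Θ → S → ℝ) (hf : ∀ θ s, 0 ≤ f θ s) (hfsum : ∀ θ, ∑ s, f θ s = 1)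
    (g : Θ → T → ℝ)
    (M : S → T → ℝ) (hM : ∀ s t, 0 ≤ M s t) (hMsum : ∀ s, ∑ t, M s t = 1)
    (hgarble : ∀ θ t, g θ t = ∑ s, f θ s * M s t)
    (h : (Θ → ℝ) → ℝ) (hconv : ConvexOn ℝ (stdSimplex ℝ Θ) h) :
    ∀ μ ∈ stdSimplex ℝ Θ, Eexp g h μ ≤ Eexp f h μ := by
  intro μ hμ
  have hμ0 : ∀ θ, 0 ≤ μ θ := hμ.1
  set α : S → ℝ := fun s => ∑ θ, μ θ * f θ s with hαdef
  have hα0 : ∀ s, 0 ≤ α s := fun s =>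
    Finset.sum_nonneg fun θ _ => mul_nonneg (hμ0 θ) (hf θ s)
  have hzero : ∀ s, α s = 0 → ∀ θ, μ θ * f θ s = 0 := fun s hs θ =>
    (Finset.sum_eq_zero_iff_of_nonneg (fun θ _ => mul_nonneg (hμ0 θ) (hf θ s))).mp hs θ
      (mem_univ θ)
  have hpostmem : ∀ s, α s ≠ 0 → post f μ s ∈ stdSimplex ℝ Θ := by
    intro s hs
    constructor
    · intro θ
      exact div_nonneg (mul_nonneg (hμ0 θ) (hf θ s)) (hα0 s)
    · simp only [post]
      rw [← Finset.sum_div]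
      exact div_self hs
  have key : ∀ t, (∑ θ, μ θ * g θ t) * h (post g μ t)
      ≤ ∑ s, (α s * M s t) * h (post f μ s) := by
    intro t
    have hβeq : (∑ θ, μ θ * g θ t) = ∑ s, α s * M s t := by
      simp_rw [hgarble, Finset.mul_sum, hαdef, Finset.sum_mul, ← mul_assoc]
      exact Finset.sum_comm
    have hw0 : ∀ s, 0 ≤ α s * M s t := fun s => mul_nonneg (hα0 s) (hM s t)
    rcases eq_or_lt_of_le (Finset.sum_nonneg fun s (_ : s ∈ univ) => hw0 s) with hβ0 | hβpos
    · have h0 : ∀ s ∈ (univ : Finset S), α s * M s t = 0 :=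
        (Finset.sum_eq_zero_iff_of_nonneg (fun s _ => hw0 s)).mp hβ0.symm
      rw [hβeq, ← hβ0, zero_mul,
        Finset.sum_eq_zero (fun s hs => by rw [h0 s hs, zero_mul])]
    · set t' := Finset.filter (fun s => α s ≠ 0) univ with ht'
      have hwsum : ∑ s ∈ t', α s * M s t = ∑ s, α s * M s t := by
        apply Finset.sum_subset (Finset.filter_subset _ _)
        intro s _ hs
        have hs0 : α s = 0 := by simpa [ht'] using hs
        rw [hs0, zero_mul]
      have hjensen := hconv.map_centerMass_le (t := t') (w := fun s => α s * M s t)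
        (p := fun s => post f μ s) (fun s _ => hw0 s) (by rw [hwsum]; exact hβpos)
        (fun s hs => hpostmem s (by simpa [ht'] using hs))
      have hcm : t'.centerMass (fun s => α s * M s t) (fun s => post f μ s)
          = post g μ t := by
        rw [Finset.centerMass, hwsum]
        funext θ
        have hterm : ∀ s ∈ t', (α s * M s t) • (post f μ s) θ = μ θ * f θ s * M s t := by
          intro s hs
          have hs0 : α s ≠ 0 := by simpa [ht'] using hs
          simp only [post, smul_eq_mul]
          field_simp
          rw [show (∑ x, μ x * f x s) = α s from rfl]
          linear_combination (M s t * μ θ * f θ s) * mul_inv_cancel₀ hs0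
        have hterm2 : ∑ s ∈ t', (α s * M s t) • (post f μ s) θ = μ θ * g θ t := by
          rw [Finset.sum_congr rfl hterm, hgarble, Finset.mul_sum]
          rw [show (∑ i, μ θ * (f θ i * M i t)) = ∑ i, μ θ * f θ i * M i t by
            simp_rw [mul_assoc]]
          apply Finset.sum_subset (Finset.filter_subset _ _)
          intro s _ hs
          have hs0 : α s = 0 := by simpa [ht'] using hs
          rw [hzero s hs0 θ, zero_mul]
        simp only [Pi.smul_apply, Finset.sum_apply]
        rw [hterm2]
        have hpg : post g μ t θ = μ θ * g θ t / (∑ s, α s * M s t) := by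
          simp only [post]; rw [hβeq]
        rw [hpg, smul_eq_mul, div_eq_inv_mul]
      rw [hβeq]
      have hle := mul_le_mul_of_nonneg_left hjensen (le_of_lt hβpos)
      rw [hcm] at hle
      refine hle.trans (le_of_eq ?_)
      rw [Finset.centerMass, hwsum, smul_eq_mul, ← mul_assoc,
        mul_inv_cancel₀ (ne_of_gt hβpos), one_mul]
      simp only [smul_eq_mul, Function.comp]
      apply Finset.sum_subset (Finset.filter_subset _ _)
      intro s _ hs
      have hs0 : α s = 0 := by simpa [ht'] using hs
      rw [hs0, zero_mul, zero_mul]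
  unfold Eexp
  calc ∑ t, (∑ θ, μ θ * g θ t) * h (post g μ t)
      ≤ ∑ t, ∑ s, (α s * M s t) * h (post f μ s) :=
        Finset.sum_le_sum fun t _ => key t
    _ = ∑ s, (∑ θ, μ θ * f θ s) * h (post f μ s) := by
        rw [Finset.sum_comm]
        refine Finset.sum_congr rfl fun s _ => ?_
        simp_rw [mul_assoc, ← Finset.mul_sum, ← Finset.sum_mul, hMsum, one_mul]
        rfl
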